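/- The function d : [0,1] × [0,1] → ℝ is a continuous pseudo-distance: for all r, s, t ∈ [0,1] one has 0 ≤ d(s,t) ≤ 2·sup_{[0,1]} f < ∞, d(s,s) = 0, d(s,t) = d(t,s), and d(s,t) ≤ d(s,r) + d(r,t); moreover the map (s,t) ↦ d(s,t) is continuous on [0,1]². -/

import Mathlib

open Set Filter

/-- The infimum `I_s^t` of `f` over the interval `[s, t]`. -/
noncomputable def infIcc (f : ℝ → ℝ) (s t : ℝ) : ℝ := sInf (f '' Set.Icc s t)

/-- The genealogical relation `s ≼ t` associated with the excursion-type function `f`,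
where `fl` is the left-limit function of `f` (with the convention `fl 0 = 0`):
`s ≼ t ↔ s ≤ t ∧ f(s-) ≤ I_s^t`. -/
def Prec (f fl : ℝ → ℝ) (s t : ℝ) : Prop := s ≤ t ∧ fl s ≤ infIcc f s t

/-- The jump `Δ_t = f(t) - f(t-)` of `f` at `t` (with the convention `fl 0 = 0`
this gives `Δ_0 = 0` for `f 0 = 0`). -/
def jump (f fl : ℝ → ℝ) (t : ℝ) : ℝ := f t - fl t

/-- The position `x_s^t = I_s^t - f(s-)` of the ancestral line of `t` in the loop at `s`. -/
noncomputable def xpos (f fl : ℝ → ℝ) (s t : ℝ) : ℝ := infIcc f s t - fl s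

/-- Distance on the cycle of length `D`: `δ_D(a,b) = min (|a-b|, D - |a-b|)`. -/
def cycleDist (D a b : ℝ) : ℝ := min |a - b| (D - |a - b|)

/-- `d₀(s,t) = ∑_{s ≺ r ≼ t} δ_{Δ_r}(0, x_r^t)`. -/
noncomputable def dZero (f fl : ℝ → ℝ) (s t : ℝ) : ℝ :=
  ∑' r : {r : ℝ // Prec f fl s r ∧ s ≠ r ∧ Prec f fl r t},
    cycleDist (jump f fl r.1) 0 (xpos f fl r.1 t)

/-- The most recent common ancestor `s ∧ t` of `s` and `t`: the greatest common
`≼`-lower bound of `s` and `t` in `[0,1]`, realized as the supremum of the set of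
common lower bounds. -/
noncomputable def mca (f fl : ℝ → ℝ) (s t : ℝ) : ℝ :=
  sSup {r : ℝ | r ∈ Set.Icc (0:ℝ) 1 ∧ Prec f fl r s ∧ Prec f fl r t}

/-- The looptree pseudo-distance
`d(s,t) = δ_{Δ_{s∧t}}(x_{s∧t}^s, x_{s∧t}^t) + d₀(s∧t, s) + d₀(s∧t, t)`. -/
noncomputable def looptreeDist (f fl : ℝ → ℝ) (s t : ℝ) : ℝ :=
  cycleDist (jump f fl (mca f fl s t)) (xpos f fl (mca f fl s t) s) (xpos f fl (mca f fl s t) t)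
    + dZero f fl (mca f fl s t) s + dZero f fl (mca f fl s t) t

structure Exc (f fl : ℝ → ℝ) : Prop where
  right : ∀ t ∈ Set.Ico (0:ℝ) 1, Filter.Tendsto f (nhdsWithin t (Set.Ici t)) (nhds (f t))
  left : ∀ t ∈ Set.Ioc (0:ℝ) 1, Filter.Tendsto f (nhdsWithin t (Set.Iio t)) (nhds (fl t))
  fl0 : fl 0 = 0
  nonneg : ∀ t ∈ Set.Icc (0:ℝ) 1, 0 ≤ f t
  flle : ∀ t ∈ Set.Icc (0:ℝ) 1, fl t ≤ f t
  f0 : f 0 = 0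
  f1 : f 1 = 0

namespace LT7
variable {f fl : ℝ → ℝ}

lemma bddBelow_img (E : Exc f fl) {s t : ℝ} (h0 : 0 ≤ s) (h1 : t ≤ 1) :
    BddBelow (f '' Set.Icc s t) := by
  refine ⟨0, fun y hy => ?_⟩
  obtain ⟨u, hu, rfl⟩ := hy
  exact E.nonneg u ⟨h0.trans hu.1, hu.2.trans h1⟩

lemma infIcc_le (E : Exc f fl) {s t u : ℝ} (h0 : 0 ≤ s) (h1 : t ≤ 1) (hu : u ∈ Set.Icc s t) :
    infIcc f s t ≤ f u :=
  csInf_le (bddBelow_img E h0 h1) (Set.mem_image_of_mem f hu)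

lemma le_infIcc {s t c : ℝ} (hst : s ≤ t) (h : ∀ u ∈ Set.Icc s t, c ≤ f u) :
    c ≤ infIcc f s t := by
  refine le_csInf (by simpa using Set.nonempty_Icc.2 hst) ?_
  rintro y ⟨u, hu, rfl⟩; exact h u hu

lemma infIcc_nonneg (E : Exc f fl) {s t : ℝ} (h0 : 0 ≤ s) (h1 : t ≤ 1) :
    0 ≤ infIcc f s t := by
  rcases le_total s t with h | h
  · exact le_infIcc h (fun u hu => E.nonneg u ⟨h0.trans hu.1, hu.2.trans h1⟩)
  · rcases eq_or_lt_of_le h with rfl | h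
    · exact le_infIcc le_rfl (fun u hu => E.nonneg u ⟨h0.trans hu.1, hu.2.trans h1⟩)
    · simp [infIcc, Set.Icc_eq_empty_of_lt h, Real.sInf_empty]

lemma infIcc_self (t : ℝ) : infIcc f t t = f t := by
  simp [infIcc]

lemma infIcc_mono_left (E : Exc f fl) {s' s t : ℝ} (h : s' ≤ s) (hst : s ≤ t)
    (h0 : 0 ≤ s') (h1 : t ≤ 1) : infIcc f s' t ≤ infIcc f s t := by
  refine csInf_le_csInf (bddBelow_img E h0 h1) (by simpa using Set.nonempty_Icc.2 hst) ?_
  exact Set.image_mono (f := f) (Set.Icc_subset_Icc_left h)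

lemma infIcc_mono_right (E : Exc f fl) {s t t' : ℝ} (hst : s ≤ t) (h : t ≤ t')
    (h0 : 0 ≤ s) (h1 : t' ≤ 1) : infIcc f s t' ≤ infIcc f s t := by
  refine csInf_le_csInf (bddBelow_img E h0 h1) (by simpa using Set.nonempty_Icc.2 hst) ?_
  exact Set.image_mono (f := f) (Set.Icc_subset_Icc_right h)

/-- If `f ≥ c` on `[a, r)` then `fl r ≥ c`. -/
lemma le_fl (E : Exc f fl) {a r c : ℝ} (h0 : 0 ≤ a) (har : a < r) (hr1 : r ≤ 1)
    (hc : ∀ u ∈ Set.Ico a r, c ≤ f u) : c ≤ fl r := by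
  refine ge_of_tendsto (E.left r ⟨lt_of_le_of_lt h0 har, hr1⟩) ?_
  filter_upwards [Filter.mem_of_superset
    (Ioo_mem_nhdsLT_of_mem (show r ∈ Set.Ioc a r from ⟨har, le_rfl⟩)) Set.Subset.rfl] with u hu
  exact hc u ⟨le_of_lt hu.1, hu.2⟩

/-- If `f ≤ c` on `[a, r)` then `fl r ≤ c`. -/
lemma fl_le (E : Exc f fl) {a r c : ℝ} (h0 : 0 ≤ a) (har : a < r) (hr1 : r ≤ 1)
    (hc : ∀ u ∈ Set.Ico a r, f u ≤ c) : fl r ≤ c := by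
  refine le_of_tendsto (E.left r ⟨lt_of_le_of_lt h0 har, hr1⟩) ?_
  filter_upwards [Filter.mem_of_superset
    (Ioo_mem_nhdsLT_of_mem (show r ∈ Set.Ioc a r from ⟨har, le_rfl⟩)) Set.Subset.rfl] with u hu
  exact hc u ⟨le_of_lt hu.1, hu.2⟩

lemma fl_nonneg (E : Exc f fl) {t : ℝ} (ht : t ∈ Set.Icc (0:ℝ) 1) : 0 ≤ fl t := by
  rcases eq_or_lt_of_le ht.1 with rfl | h
  · exact le_of_eq E.fl0.symm
  · exact le_fl E le_rfl h ht.2 (fun u hu => E.nonneg u ⟨hu.1, (le_of_lt hu.2).trans ht.2⟩)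

/-- For `s < r ≤ t`, `I_s^t ≤ fl r`. -/
lemma infIcc_le_fl (E : Exc f fl) {s r t : ℝ} (h0 : 0 ≤ s) (hsr : s < r) (hrt : r ≤ t)
    (h1 : t ≤ 1) : infIcc f s t ≤ fl r :=
  le_fl E h0 hsr (hrt.trans h1)
    (fun u hu => infIcc_le E h0 h1 ⟨hu.1, (le_of_lt hu.2).trans hrt⟩)

lemma jump_nonneg (E : Exc f fl) {t : ℝ} (ht : t ∈ Set.Icc (0:ℝ) 1) : 0 ≤ jump f fl t :=
  sub_nonneg.2 (E.flle t ht)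

end LT7

namespace LT7
variable {f fl : ℝ → ℝ}

lemma prec_refl (E : Exc f fl) {t : ℝ} (ht : t ∈ Set.Icc (0:ℝ) 1) : Prec f fl t t :=
  ⟨le_rfl, by rw [infIcc_self]; exact E.flle t ht⟩

lemma prec_pos {a r : ℝ} (h0 : 0 ≤ a) (h : Prec f fl a r) (hne : a ≠ r) : 0 < r :=
  lt_of_le_of_lt h0 (lt_of_le_of_ne h.1 hne)

lemma prec_trans (E : Exc f fl) {r s t : ℝ} (h0 : 0 ≤ r) (h1 : t ≤ 1)
    (hrs : Prec f fl r s) (hst : Prec f fl s t) : Prec f fl r t := by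
  obtain ⟨hrs1, hrs2⟩ := hrs
  obtain ⟨hst1, hst2⟩ := hst
  rcases eq_or_lt_of_le hrs1 with rfl | hlt
  · exact ⟨hst1, hst2⟩
  have hs1 : s ≤ 1 := hst1.trans h1
  refine ⟨hrs1.trans hst1, le_infIcc (hrs1.trans hst1) ?_⟩
  intro u hu
  rcases le_total u s with h | h
  · exact hrs2.trans (infIcc_le E h0 hs1 ⟨hu.1, h⟩)
  · calc fl r ≤ infIcc f r s := hrs2
      _ ≤ fl s := infIcc_le_fl E h0 hlt le_rfl hs1
      _ ≤ infIcc f s t := hst2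
      _ ≤ f u := infIcc_le E (h0.trans hrs1) h1 ⟨h, hu.2⟩

/-- Ancestors of a common point are comparable. -/
lemma prec_of_le (E : Exc f fl) {p q t : ℝ} (h0 : 0 ≤ p) (h1 : t ≤ 1)
    (hp : Prec f fl p t) (hq : Prec f fl q t) (hpq : p ≤ q) : Prec f fl p q :=
  ⟨hpq, hp.2.trans (infIcc_mono_right E hpq hq.1 h0 h1)⟩

end LT7

namespace LT7
variable {f fl : ℝ → ℝ}

/-- The sup of a set of ancestors of `s` is an ancestor of `s`. -/
lemma prec_sSup (E : Exc f fl) {A : Set ℝ} {s : ℝ} (hs : s ∈ Set.Icc (0:ℝ) 1)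
    (hA : ∀ r ∈ A, 0 ≤ r ∧ Prec f fl r s) (hne : A.Nonempty) :
    Prec f fl (sSup A) s := by
  have hbdd : BddAbove A := ⟨s, fun r hr => (hA r hr).2.1⟩
  set c := sSup A with hc
  have hcs : c ≤ s := csSup_le hne (fun r hr => (hA r hr).2.1)
  have hc0 : 0 ≤ c := by
    obtain ⟨a, ha⟩ := hne
    exact (hA a ha).1.trans (le_csSup hbdd ha)
  by_contra hcon
  have hcon' : infIcc f c s < fl c := by
    rcases lt_or_ge (infIcc f c s) (fl c) with h | h
    · exact h
    · exact absurd ⟨hcs, h⟩ hcon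
  have hcpos : 0 < c := by
    rcases eq_or_lt_of_le hc0 with h | h
    · exfalso
      have h1 : fl c = 0 := by rw [← h, E.fl0]
      have h2 : (0:ℝ) ≤ infIcc f c s := infIcc_nonneg E hc0 hs.2
      linarith
    · exact h
  set γ := (infIcc f c s + fl c) / 2 with hγ
  have hγ1 : infIcc f c s < γ := by rw [hγ]; linarith
  have hγ2 : γ < fl c := by rw [hγ]; linarith
  have hev : ∀ᶠ u in nhdsWithin c (Set.Iio c), γ < f u :=
    (E.left c ⟨hcpos, hcs.trans hs.2⟩).eventually (eventually_gt_nhds hγ2)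
  obtain ⟨l, hl, hsub⟩ := mem_nhdsLT_iff_exists_Ioo_subset.1 hev
  obtain ⟨a, haA, hla⟩ := exists_lt_of_lt_csSup hne
    (show max l 0 < c from max_lt hl hcpos)
  have ha_le : a ≤ c := le_csSup hbdd haA
  rcases eq_or_lt_of_le ha_le with heq | halt
  · exact absurd (heq ▸ (hA a haA).2.2) (not_le.2 hcon')
  · have hfla_le : fl a ≤ infIcc f c s :=
      ((hA a haA).2.2).trans (infIcc_mono_left E ha_le hcs (hA a haA).1 hs.2)
    set w := (max l 0 + a) / 2 with hw
    have hw1 : max l 0 < w := by rw [hw]; linarith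
    have hw2 : w < a := by rw [hw]; linarith
    have hfla_ge : γ ≤ fl a := by
      refine le_fl E ((le_max_right l 0).trans hw1.le) hw2 ((hA a haA).2.1.trans hs.2) ?_
      intro u hu
      exact le_of_lt (hsub ⟨lt_of_le_of_lt (le_max_left l 0) (lt_of_lt_of_le hw1 hu.1),
        lt_trans hu.2 halt⟩)
    linarith

/-- The set of common lower bounds. -/
def lbSet (f fl : ℝ → ℝ) (s t : ℝ) : Set ℝ :=
  {r : ℝ | r ∈ Set.Icc (0:ℝ) 1 ∧ Prec f fl r s ∧ Prec f fl r t}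

lemma mca_eq_sSup (s t : ℝ) : mca f fl s t = sSup (lbSet f fl s t) := rfl

lemma zero_mem_lbSet (E : Exc f fl) {s t : ℝ} (hs : s ∈ Set.Icc (0:ℝ) 1)
    (ht : t ∈ Set.Icc (0:ℝ) 1) : (0:ℝ) ∈ lbSet f fl s t := by
  refine ⟨⟨le_rfl, zero_le_one⟩, ⟨hs.1, ?_⟩, ⟨ht.1, ?_⟩⟩
  · rw [E.fl0]; exact infIcc_nonneg E le_rfl hs.2
  · rw [E.fl0]; exact infIcc_nonneg E le_rfl ht.2

lemma bddAbove_lbSet {s t : ℝ} : BddAbove (lbSet f fl s t) :=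
  ⟨s, fun r hr => hr.2.1.1⟩

lemma mca_nonneg (E : Exc f fl) {s t : ℝ} (hs : s ∈ Set.Icc (0:ℝ) 1)
    (ht : t ∈ Set.Icc (0:ℝ) 1) : 0 ≤ mca f fl s t :=
  le_csSup bddAbove_lbSet (zero_mem_lbSet E hs ht)

lemma mca_le_left (E : Exc f fl) {s t : ℝ} (hs : s ∈ Set.Icc (0:ℝ) 1)
    (ht : t ∈ Set.Icc (0:ℝ) 1) : mca f fl s t ≤ s :=
  csSup_le ⟨0, zero_mem_lbSet E hs ht⟩ (fun r hr => hr.2.1.1)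

lemma mca_mem_Icc (E : Exc f fl) {s t : ℝ} (hs : s ∈ Set.Icc (0:ℝ) 1)
    (ht : t ∈ Set.Icc (0:ℝ) 1) : mca f fl s t ∈ Set.Icc (0:ℝ) 1 :=
  ⟨mca_nonneg E hs ht, (mca_le_left E hs ht).trans hs.2⟩

lemma mca_prec_left (E : Exc f fl) {s t : ℝ} (hs : s ∈ Set.Icc (0:ℝ) 1)
    (ht : t ∈ Set.Icc (0:ℝ) 1) : Prec f fl (mca f fl s t) s :=
  prec_sSup E hs (fun r hr => ⟨hr.1.1, hr.2.1⟩) ⟨0, zero_mem_lbSet E hs ht⟩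

lemma mca_comm (s t : ℝ) : mca f fl s t = mca f fl t s := by
  unfold mca
  congr 1
  ext r
  simp only [Set.mem_setOf_eq]
  tauto

lemma mca_prec_right (E : Exc f fl) {s t : ℝ} (hs : s ∈ Set.Icc (0:ℝ) 1)
    (ht : t ∈ Set.Icc (0:ℝ) 1) : Prec f fl (mca f fl s t) t := by
  rw [mca_comm]; exact mca_prec_left E ht hs

lemma le_mca (E : Exc f fl) {s t r : ℝ} (hr : r ∈ lbSet f fl s t) : r ≤ mca f fl s t :=
  le_csSup bddAbove_lbSet hr

lemma mca_of_prec (E : Exc f fl) {s t : ℝ} (hs : s ∈ Set.Icc (0:ℝ) 1)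
    (ht : t ∈ Set.Icc (0:ℝ) 1) (h : Prec f fl s t) : mca f fl s t = s :=
  le_antisymm (mca_le_left E hs ht)
    (le_mca E ⟨hs, prec_refl E hs, h⟩)

lemma mca_self (E : Exc f fl) {s : ℝ} (hs : s ∈ Set.Icc (0:ℝ) 1) : mca f fl s s = s :=
  mca_of_prec E hs hs (prec_refl E hs)

end LT7

namespace LT7
variable {f fl : ℝ → ℝ}

lemma xpos_nonneg {m u : ℝ} (h : Prec f fl m u) : 0 ≤ xpos f fl m u :=
  sub_nonneg.2 h.2

lemma xpos_le_jump (E : Exc f fl) {m u : ℝ} (h0 : 0 ≤ m) (h1 : u ≤ 1) (h : Prec f fl m u) :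
    xpos f fl m u ≤ jump f fl m :=
  sub_le_sub_right (infIcc_le E h0 h1 ⟨le_rfl, h.1⟩) _

lemma cycleDist_nonneg {D a b : ℝ} (h : |a - b| ≤ D) : 0 ≤ cycleDist D a b :=
  le_min (abs_nonneg _) (by linarith)

lemma cycleDist_nonneg' {D a b : ℝ} (ha : a ∈ Set.Icc 0 D) (hb : b ∈ Set.Icc 0 D) :
    0 ≤ cycleDist D a b :=
  cycleDist_nonneg (abs_sub_le_iff.2 ⟨by linarith [ha.2, hb.1], by linarith [hb.2, ha.1]⟩)

lemma cycleDist_comm (D a b : ℝ) : cycleDist D a b = cycleDist D b a := by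
  unfold cycleDist; rw [abs_sub_comm]

lemma cycleDist_self {D a : ℝ} (hD : 0 ≤ D) : cycleDist D a a = 0 := by
  simp [cycleDist, hD]

lemma cycleDist_le_abs (D a b : ℝ) : cycleDist D a b ≤ |a - b| := min_le_left _ _

lemma cycleDist_zero_left {D a : ℝ} (ha : 0 ≤ a) : cycleDist D 0 a ≤ a := by
  refine (cycleDist_le_abs _ _ _).trans ?_
  rw [abs_sub_comm, sub_zero, abs_of_nonneg ha]

lemma cycleDist_jump_self {D : ℝ} (hD : 0 ≤ D) : cycleDist D 0 D = 0 := by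
  unfold cycleDist
  rw [zero_sub, abs_neg, abs_of_nonneg hD]
  simp [hD]

lemma min_tri {D x y z : ℝ} (t1 : z ≤ x + y) (t2 : y ≤ x + z) (t3 : x ≤ y + z)
    (t4 : x + y + z ≤ 2*D) : min z (D - z) ≤ min x (D - x) + min y (D - y) := by
  rcases min_cases x (D - x) with ⟨q1, w1⟩ | ⟨q1, w1⟩ <;>
    rcases min_cases y (D - y) with ⟨q2, w2⟩ | ⟨q2, w2⟩ <;> rw [q1, q2]
  · exact min_le_iff.2 (Or.inl (by linarith))
  · exact min_le_iff.2 (Or.inr (by linarith))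
  · exact min_le_iff.2 (Or.inr (by linarith))
  · exact min_le_iff.2 (Or.inl (by linarith))

lemma cycleDist_triangle {D a b c : ℝ} (ha : a ∈ Set.Icc 0 D) (hb : b ∈ Set.Icc 0 D)
    (hc : c ∈ Set.Icc 0 D) :
    cycleDist D a c ≤ cycleDist D a b + cycleDist D b c := by
  obtain ⟨ha1, ha2⟩ := ha
  obtain ⟨hb1, hb2⟩ := hb
  obtain ⟨hc1, hc2⟩ := hc
  unfold cycleDist
  have t4 : |a - b| + |b - c| + |a - c| ≤ 2*D := by
    rcases abs_cases (a - b) with ⟨e1, s1⟩ | ⟨e1, s1⟩ <;>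
      rcases abs_cases (b - c) with ⟨e2, s2⟩ | ⟨e2, s2⟩ <;>
        rcases abs_cases (a - c) with ⟨e3, s3⟩ | ⟨e3, s3⟩ <;>
          rw [e1, e2, e3] <;> linarith
  exact min_tri (abs_sub_le a b c)
    (by simpa [abs_sub_comm] using abs_sub_le b a c)
    (by rw [add_comm]; simpa [abs_sub_comm] using abs_sub_le a c b) t4

end LT7

namespace LT7
variable {f fl : ℝ → ℝ}

/-- Telescoping bound: intervals `(fl r, I_r^T)` for ancestors `r` of `T` are disjoint. -/
lemma tele_sum (E : Exc f fl) {T A : ℝ} (hT1 : T ≤ 1) (F : Finset ℝ) :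
    ∀ (_ : ∀ r ∈ F, 0 < r ∧ r ≤ T ∧ A ≤ fl r) (B : ℝ)
      (_ : ∀ r ∈ F, infIcc f r T ≤ B) (_ : A ≤ B),
    ∑ r ∈ F, (infIcc f r T - fl r) ≤ B - A := by
  classical
  induction F using Finset.strongInduction with
  | _ F ih =>
    intro hmem B hB hAB
    rcases F.eq_empty_or_nonempty with rfl | hne
    · simp; linarith
    · set rm := F.max' hne with hrm
      have hrmF : rm ∈ F := F.max'_mem hne
      have hsum : ∑ r ∈ F.erase rm, (infIcc f r T - fl r) + (infIcc f rm T - fl rm)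
          = ∑ r ∈ F, (infIcc f r T - fl r) := Finset.sum_erase_add F _ hrmF
      have hih : ∑ r ∈ F.erase rm, (infIcc f r T - fl r) ≤ fl rm - A := by
        refine ih (F.erase rm) (Finset.erase_ssubset hrmF)
          (fun r hr => hmem r (Finset.mem_of_mem_erase hr)) (fl rm) ?_ (hmem rm hrmF).2.2
        intro r hr
        have hrF := Finset.mem_of_mem_erase hr
        have hlt : r < rm := lt_of_le_of_ne (F.le_max' r hrF) (Finset.ne_of_mem_erase hr)
        exact infIcc_le_fl E (hmem r hrF).1.le hlt (hmem rm hrmF).2.1 hT1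
      have := hB rm hrmF
      linarith

/-- index set of `dZero`. -/
def dzSet (f fl : ℝ → ℝ) (s t : ℝ) : Set ℝ :=
  {r : ℝ | Prec f fl s r ∧ s ≠ r ∧ Prec f fl r t}

lemma dZero_eq (s t : ℝ) :
    dZero f fl s t = ∑' r : dzSet f fl s t, cycleDist (jump f fl r.1) 0 (xpos f fl r.1 t) := rfl

lemma dz_mem_Icc {s t r : ℝ} (hs0 : 0 ≤ s) (ht1 : t ≤ 1) (hr : r ∈ dzSet f fl s t) :
    r ∈ Set.Icc (0:ℝ) 1 := ⟨hs0.trans hr.1.1, hr.2.2.1.trans ht1⟩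

lemma dz_term_nonneg (E : Exc f fl) {s t : ℝ} (hs0 : 0 ≤ s) (ht1 : t ≤ 1)
    {r : ℝ} (hr : r ∈ dzSet f fl s t) :
    0 ≤ cycleDist (jump f fl r) 0 (xpos f fl r t) := by
  have h0r : (0:ℝ) ≤ r := hs0.trans hr.1.1
  refine cycleDist_nonneg' ?_ ?_
  · exact ⟨le_rfl, jump_nonneg E (dz_mem_Icc hs0 ht1 hr)⟩
  · exact ⟨xpos_nonneg hr.2.2, xpos_le_jump E h0r ht1 hr.2.2⟩

lemma dz_term_le (E : Exc f fl) {s t : ℝ} (hs0 : 0 ≤ s) (ht : t ∈ Set.Icc (0:ℝ) 1)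
    {r : ℝ} (hr : r ∈ dzSet f fl s t) :
    cycleDist (jump f fl r) 0 (xpos f fl r t)
      ≤ (if r = t then 0 else xpos f fl r t) := by
  rcases eq_or_ne r t with rfl | hne
  · rw [if_pos rfl]
    have : xpos f fl r r = jump f fl r := by
      unfold xpos jump; rw [infIcc_self]
    rw [this]
    exact le_of_eq (cycleDist_jump_self (jump_nonneg E (dz_mem_Icc hs0 ht.2 hr)))
  · rw [if_neg hne]
    exact cycleDist_zero_left (xpos_nonneg hr.2.2)

lemma dz_sum_le (E : Exc f fl) {s t A B : ℝ} (hs0 : 0 ≤ s) (ht : t ∈ Set.Icc (0:ℝ) 1)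
    (hAB : A ≤ B)
    (h : ∀ r, r ∈ dzSet f fl s t → r ≠ t → A ≤ fl r ∧ infIcc f r t ≤ B)
    (F : Finset {r : ℝ // Prec f fl s r ∧ s ≠ r ∧ Prec f fl r t}) :
    ∑ x ∈ F, cycleDist (jump f fl x.1) 0 (xpos f fl x.1 t) ≤ B - A := by
  classical
  have step1 : ∑ x ∈ F, cycleDist (jump f fl x.1) 0 (xpos f fl x.1 t)
      ≤ ∑ x ∈ F, (if x.1 = t then 0 else xpos f fl x.1 t) :=
    Finset.sum_le_sum (fun x _ => dz_term_le E hs0 ht x.2)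
  have step2 : ∑ r ∈ F.image Subtype.val, (if r = t then 0 else xpos f fl r t)
      = ∑ x ∈ F, (if x.1 = t then 0 else xpos f fl x.1 t) :=
    Finset.sum_image (f := fun r => if r = t then 0 else xpos f fl r t)
      (g := Subtype.val) (fun x _ y _ h => Subtype.val_injective h)
  have step3 : ∑ r ∈ F.image Subtype.val, (if r = t then 0 else xpos f fl r t)
      = ∑ r ∈ (F.image Subtype.val).erase t, (if r = t then 0 else xpos f fl r t) :=
    (Finset.sum_erase _ (by simp)).symm
  have step4 : ∑ r ∈ (F.image Subtype.val).erase t, (if r = t then 0 else xpos f fl r t)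
      = ∑ r ∈ (F.image Subtype.val).erase t, (infIcc f r t - fl r) := by
    refine Finset.sum_congr rfl (fun r hr => ?_)
    rw [if_neg (Finset.ne_of_mem_erase hr)]
    rfl
  have hmemdz : ∀ r ∈ (F.image Subtype.val).erase t, r ∈ dzSet f fl s t ∧ r ≠ t := by
    intro r hr
    have := Finset.mem_of_mem_erase hr
    simp only [Finset.mem_image] at this
    obtain ⟨x, _, rfl⟩ := this
    exact ⟨x.2, Finset.ne_of_mem_erase hr⟩
  have step5 : ∑ r ∈ (F.image Subtype.val).erase t, (infIcc f r t - fl r) ≤ B - A := by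
    refine tele_sum E ht.2 _ ?_ B ?_ hAB
    · intro r hr
      obtain ⟨hdz, hnt⟩ := hmemdz r hr
      exact ⟨prec_pos hs0 hdz.1 hdz.2.1, hdz.2.2.1, (h r hdz hnt).1⟩
    · intro r hr
      obtain ⟨hdz, hnt⟩ := hmemdz r hr
      exact (h r hdz hnt).2
  linarith [step1, step2, step3, step4, step5]

lemma dZero_summable (E : Exc f fl) {s t : ℝ} (hs0 : 0 ≤ s) (ht : t ∈ Set.Icc (0:ℝ) 1) :
    Summable (fun r : {r : ℝ // Prec f fl s r ∧ s ≠ r ∧ Prec f fl r t} =>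
      cycleDist (jump f fl r.1) 0 (xpos f fl r.1 t)) := by
  refine summable_of_sum_le (c := f t - 0) (fun x => dz_term_nonneg E hs0 ht.2 x.2) ?_
  refine dz_sum_le E hs0 ht (by simpa using E.nonneg t ht) ?_
  intro r hdz hnt
  constructor
  · exact fl_nonneg E (dz_mem_Icc hs0 ht.2 hdz)
  · exact infIcc_le E (hs0.trans hdz.1.1) ht.2 ⟨hdz.2.2.1, le_rfl⟩

lemma dZero_nonneg (E : Exc f fl) {s t : ℝ} (hs0 : 0 ≤ s) (ht1 : t ≤ 1) :
    0 ≤ dZero f fl s t :=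
  tsum_nonneg (fun x => dz_term_nonneg E hs0 ht1 x.2)

lemma dZero_le (E : Exc f fl) {s t A B : ℝ} (hs0 : 0 ≤ s) (ht : t ∈ Set.Icc (0:ℝ) 1)
    (hAB : A ≤ B)
    (h : ∀ r, r ∈ dzSet f fl s t → r ≠ t → A ≤ fl r ∧ infIcc f r t ≤ B) :
    dZero f fl s t ≤ B - A :=
  Summable.tsum_le_of_sum_le (dZero_summable E hs0 ht) (dz_sum_le E hs0 ht hAB h)

lemma dZero_self (s : ℝ) : dZero f fl s s = 0 := by
  have : IsEmpty {r : ℝ // Prec f fl s r ∧ s ≠ r ∧ Prec f fl r s} := by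
    refine ⟨fun x => ?_⟩
    exact x.2.2.1 (le_antisymm x.2.1.1 x.2.2.2.1)
  exact tsum_empty

end LT7

namespace LT7
variable {f fl : ℝ → ℝ}

noncomputable def phi (f fl : ℝ → ℝ) (r u : ℝ) : ℝ :=
  if r ≤ u then max 0 (min (infIcc f r u - fl r) (jump f fl r)) else 0

noncomputable def gfun (f fl : ℝ → ℝ) (s t r : ℝ) : ℝ :=
  if r ∈ Set.Icc (0:ℝ) 1 then cycleDist (jump f fl r) (phi f fl r s) (phi f fl r t) else 0

lemma phi_mem {r u : ℝ} (hΔ : 0 ≤ jump f fl r) : phi f fl r u ∈ Set.Icc 0 (jump f fl r) := by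
  unfold phi
  split
  · exact ⟨le_max_left _ _, max_le hΔ (min_le_right _ _)⟩
  · exact ⟨le_rfl, hΔ⟩

lemma phi_prec (E : Exc f fl) {r u : ℝ} (h0 : 0 ≤ r) (h1 : u ≤ 1) (h : Prec f fl r u) :
    phi f fl r u = xpos f fl r u := by
  unfold phi
  rw [if_pos h.1]
  have hx1 : 0 ≤ xpos f fl r u := xpos_nonneg h
  have hx2 : xpos f fl r u ≤ jump f fl r := xpos_le_jump E h0 h1 h
  rw [show infIcc f r u - fl r = xpos f fl r u from rfl, min_eq_left hx2, max_eq_right hx1]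

lemma phi_not_prec {r u : ℝ} (hru : r ≤ u) (hn : ¬ Prec f fl r u) (hΔ : 0 ≤ jump f fl r) :
    phi f fl r u = 0 := by
  unfold phi
  rw [if_pos hru]
  have hneg : infIcc f r u - fl r < 0 := by
    by_contra hc
    exact hn ⟨hru, by linarith [not_lt.1 hc]⟩
  rw [min_eq_left (by linarith), max_eq_left (by linarith)]

lemma phi_gt {r u : ℝ} (h : u < r) : phi f fl r u = 0 := by
  unfold phi; rw [if_neg (not_le.2 h)]

lemma phi_zero_of_not_prec' (E : Exc f fl) {r u : ℝ} (hr : r ∈ Set.Icc (0:ℝ) 1)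
    (hn : ¬ Prec f fl r u) : phi f fl r u = 0 := by
  rcases le_or_gt r u with h | h
  · exact phi_not_prec h hn (jump_nonneg E hr)
  · exact phi_gt h

/-- The key pointwise identity decomposing `gfun` into the three pieces of `looptreeDist`. -/
lemma gfun_eq (E : Exc f fl) {s t : ℝ} (hs : s ∈ Set.Icc (0:ℝ) 1) (ht : t ∈ Set.Icc (0:ℝ) 1)
    (r : ℝ) :
    gfun f fl s t r =
      (if r = mca f fl s t then
        cycleDist (jump f fl (mca f fl s t)) (xpos f fl (mca f fl s t) s)
          (xpos f fl (mca f fl s t) t) else 0)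
      + Set.indicator (dzSet f fl (mca f fl s t) s)
          (fun r => cycleDist (jump f fl r) 0 (xpos f fl r s)) r
      + Set.indicator (dzSet f fl (mca f fl s t) t)
          (fun r => cycleDist (jump f fl r) 0 (xpos f fl r t)) r := by
  set m := mca f fl s t with hmdef
  have hm : m ∈ Set.Icc (0:ℝ) 1 := mca_mem_Icc E hs ht
  have hms : Prec f fl m s := mca_prec_left E hs ht
  have hmt : Prec f fl m t := mca_prec_right E hs ht
  have hmax : ∀ u, u ∈ Set.Icc (0:ℝ) 1 → Prec f fl u s → Prec f fl u t → u ≤ m :=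
    fun u hu h1 h2 => le_mca E ⟨hu, h1, h2⟩
  by_cases hrI : r ∈ Set.Icc (0:ℝ) 1
  case neg =>
    rw [gfun, if_neg hrI, if_neg (fun h => hrI (by rw [h]; exact hm)),
      Set.indicator_of_notMem (fun h => hrI (dz_mem_Icc hm.1 hs.2 h)),
      Set.indicator_of_notMem (fun h => hrI (dz_mem_Icc hm.1 ht.2 h))]
    ring
  case pos =>
  rcases eq_or_ne r m with rfl | hrm
  · rw [gfun, if_pos hrI, if_pos rfl,
      Set.indicator_of_notMem (fun h => h.2.1 rfl),
      Set.indicator_of_notMem (fun h => h.2.1 rfl),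
      phi_prec E hm.1 hs.2 hms, phi_prec E hm.1 ht.2 hmt]
    ring
  · rw [if_neg hrm]
    have h0r : (0:ℝ) ≤ r := hrI.1
    have hΔ : 0 ≤ jump f fl r := jump_nonneg E hrI
    by_cases hrs : Prec f fl r s
    · by_cases hmr : m ≤ r
      · -- m < r ≤ s : contributes to dZero m s
        have hmr' : Prec f fl m r := prec_of_le E hm.1 hs.2 hms hrs hmr
        have hnrt : ¬ Prec f fl r t := fun h =>
          absurd (hmax r hrI hrs h) (not_le.2 (lt_of_le_of_ne hmr (fun e => hrm e.symm)))
        have hmem : r ∈ dzSet f fl m s := ⟨hmr', fun h => hrm h.symm, hrs⟩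
        rw [Set.indicator_of_mem hmem,
          Set.indicator_of_notMem (fun h => hnrt h.2.2)]
        rw [gfun, if_pos hrI, phi_prec E h0r hs.2 hrs, phi_zero_of_not_prec' E hrI hnrt,
          cycleDist_comm]
        ring
      · -- r < m : ancestor of m, contributes nothing
        have hrm' : r < m := lt_of_not_ge hmr
        have hrpm : Prec f fl r m := prec_of_le E h0r hs.2 hrs hms hrm'.le
        have hrt : Prec f fl r t := prec_trans E h0r ht.2 hrpm hmt
        have hkey : ∀ u, u ∈ Set.Icc (0:ℝ) 1 → Prec f fl m u → Prec f fl r u →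
            infIcc f r u = infIcc f r m := by
          intro u hu hmu hru
          refine le_antisymm (infIcc_mono_right E hrm'.le hmu.1 h0r hu.2) ?_
          refine le_infIcc hru.1 (fun v hv => ?_)
          rcases le_total v m with h | h
          · exact infIcc_le E h0r hm.2 ⟨hv.1, h⟩
          · calc infIcc f r m ≤ fl m := infIcc_le_fl E h0r hrm' le_rfl hm.2
              _ ≤ infIcc f m u := hmu.2
              _ ≤ f v := infIcc_le E hm.1 hu.2 ⟨h, hv.2⟩
        rw [Set.indicator_of_notMem (fun h => hmr h.1.1),
          Set.indicator_of_notMem (fun h => hmr h.1.1)]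
        rw [gfun, if_pos hrI, phi_prec E h0r hs.2 hrs, phi_prec E h0r ht.2 hrt]
        unfold xpos
        rw [hkey s hs hms hrs, hkey t ht hmt hrt, cycleDist_self hΔ]
        ring
    · by_cases hrt : Prec f fl r t
      · -- m < r ≤ t : contributes to dZero m t
        have hmr : m ≤ r := by
          by_contra hc
          have hrm' : r < m := lt_of_not_ge hc
          have hrpm : Prec f fl r m := prec_of_le E h0r ht.2 hrt hmt hrm'.le
          exact hrs (prec_trans E h0r hs.2 hrpm hms)
        have hmr' : Prec f fl m r := prec_of_le E hm.1 ht.2 hmt hrt hmr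
        have hmem : r ∈ dzSet f fl m t := ⟨hmr', fun h => hrm h.symm, hrt⟩
        rw [Set.indicator_of_notMem (fun h => hrs h.2.2),
          Set.indicator_of_mem hmem]
        rw [gfun, if_pos hrI, phi_prec E h0r ht.2 hrt, phi_zero_of_not_prec' E hrI hrs]
        ring
      · -- not related to either
        rw [Set.indicator_of_notMem (fun h => hrs h.2.2),
          Set.indicator_of_notMem (fun h => hrt h.2.2)]
        rw [gfun, if_pos hrI, phi_zero_of_not_prec' E hrI hrs, phi_zero_of_not_prec' E hrI hrt,
          cycleDist_self hΔ]
        ring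

end LT7

namespace LT7
variable {f fl : ℝ → ℝ}

lemma ind1_summable (E : Exc f fl) {m s : ℝ} (hm0 : 0 ≤ m) (hs : s ∈ Set.Icc (0:ℝ) 1) :
    Summable ((dzSet f fl m s).indicator (fun r => cycleDist (jump f fl r) 0 (xpos f fl r s))) :=
  summable_subtype_iff_indicator.1 (dZero_summable E hm0 hs)

lemma dZero_eq_tsum_indicator (E : Exc f fl) {m s : ℝ} :
    dZero f fl m s = ∑' r : ℝ,
      (dzSet f fl m s).indicator (fun r => cycleDist (jump f fl r) 0 (xpos f fl r s)) r :=
  tsum_subtype (dzSet f fl m s) (fun r => cycleDist (jump f fl r) 0 (xpos f fl r s))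

lemma looptree_eq (E : Exc f fl) {s t : ℝ} (hs : s ∈ Set.Icc (0:ℝ) 1)
    (ht : t ∈ Set.Icc (0:ℝ) 1) :
    looptreeDist f fl s t = ∑' r : ℝ, gfun f fl s t r := by
  classical
  set m := mca f fl s t with hmdef
  have hm : m ∈ Set.Icc (0:ℝ) 1 := mca_mem_Icc E hs ht
  set C := cycleDist (jump f fl m) (xpos f fl m s) (xpos f fl m t) with hCdef
  have h0 : Summable (fun r : ℝ => if r = m then C else 0) := (hasSum_ite_eq m C).summable
  have h1 := ind1_summable E hm.1 hs (f := f) (fl := fl) (m := m)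
  have h2 := ind1_summable E hm.1 ht (f := f) (fl := fl) (m := m)
  have key : ∑' r : ℝ, gfun f fl s t r
      = (∑' r : ℝ, (if r = m then C else 0))
        + (∑' r : ℝ, (dzSet f fl m s).indicator
            (fun r => cycleDist (jump f fl r) 0 (xpos f fl r s)) r)
        + (∑' r : ℝ, (dzSet f fl m t).indicator
            (fun r => cycleDist (jump f fl r) 0 (xpos f fl r t)) r) := by
    rw [← Summable.tsum_add h0 h1, ← Summable.tsum_add (h0.add h1) h2]
    exact tsum_congr (fun r => gfun_eq E hs ht r)
  rw [key, tsum_ite_eq, ← dZero_eq_tsum_indicator E, ← dZero_eq_tsum_indicator E]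
  rfl

lemma gfun_nonneg (E : Exc f fl) (s t r : ℝ) : 0 ≤ gfun f fl s t r := by
  unfold gfun
  split
  case isTrue h =>
    exact cycleDist_nonneg' (phi_mem (jump_nonneg E h)) (phi_mem (jump_nonneg E h))
  case isFalse => exact le_rfl

lemma gfun_summable (E : Exc f fl) {s t : ℝ} (hs : s ∈ Set.Icc (0:ℝ) 1)
    (ht : t ∈ Set.Icc (0:ℝ) 1) : Summable (gfun f fl s t) := by
  classical
  have := ((hasSum_ite_eq (mca f fl s t)
      (cycleDist (jump f fl (mca f fl s t)) (xpos f fl (mca f fl s t) s)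
        (xpos f fl (mca f fl s t) t))).summable.add
    (ind1_summable E (mca_mem_Icc E hs ht).1 hs (m := mca f fl s t))).add
    (ind1_summable E (mca_mem_Icc E hs ht).1 ht (m := mca f fl s t))
  exact (summable_congr (fun r => (gfun_eq E hs ht r).symm)).1 this

lemma looptree_nonneg (E : Exc f fl) {s t : ℝ} (hs : s ∈ Set.Icc (0:ℝ) 1)
    (ht : t ∈ Set.Icc (0:ℝ) 1) : 0 ≤ looptreeDist f fl s t := by
  rw [looptree_eq E hs ht]
  exact tsum_nonneg (fun r => gfun_nonneg E s t r)

lemma looptree_symm (s t : ℝ) : looptreeDist f fl s t = looptreeDist f fl t s := by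
  unfold looptreeDist
  rw [mca_comm (f := f) (fl := fl) t s, cycleDist_comm]
  ring

lemma looptree_self (E : Exc f fl) {s : ℝ} (hs : s ∈ Set.Icc (0:ℝ) 1) :
    looptreeDist f fl s s = 0 := by
  unfold looptreeDist
  rw [mca_self E hs, dZero_self, cycleDist_self (jump_nonneg E hs)]
  ring

lemma gfun_tri (E : Exc f fl) (s t w r : ℝ) :
    gfun f fl s t r ≤ gfun f fl s w r + gfun f fl w t r := by
  unfold gfun
  split
  case isTrue h =>
    exact cycleDist_triangle (phi_mem (jump_nonneg E h)) (phi_mem (jump_nonneg E h))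
      (phi_mem (jump_nonneg E h))
  case isFalse => simp

lemma looptree_triangle (E : Exc f fl) {s t w : ℝ} (hs : s ∈ Set.Icc (0:ℝ) 1)
    (ht : t ∈ Set.Icc (0:ℝ) 1) (hw : w ∈ Set.Icc (0:ℝ) 1) :
    looptreeDist f fl s t ≤ looptreeDist f fl s w + looptreeDist f fl w t := by
  rw [looptree_eq E hs ht, looptree_eq E hs hw, looptree_eq E hw ht, ← Summable.tsum_add
    (gfun_summable E hs hw) (gfun_summable E hw ht)]
  exact Summable.tsum_le_tsum (fun r => gfun_tri E s t w r) (gfun_summable E hs ht)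
    ((gfun_summable E hs hw).add (gfun_summable E hw ht))

end LT7

namespace LT7
variable {f fl : ℝ → ℝ}

lemma bddAbove_image (E : Exc f fl) : BddAbove (f '' Set.Icc (0:ℝ) 1) := by
  have hcomp : IsCompact (Set.Icc (0:ℝ) 1) := isCompact_Icc
  refine hcomp.induction_on (p := fun s => BddAbove (f '' s)) (by simp) ?_ ?_ ?_
  · intro u v huv hv
    exact hv.mono (Set.image_mono (f := f) huv)
  · intro u v hu hv
    rw [Set.image_union]
    exact hu.union hv
  · intro x hx
    -- bounded on a neighborhood of x within [0,1]
    have hleft : ∃ u ∈ nhdsWithin x (Set.Icc (0:ℝ) 1 ∩ Set.Iio x), BddAbove (f '' u) := by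
      rcases eq_or_lt_of_le hx.1 with h | h
      · refine ⟨∅, ?_, by simp⟩
        have : Set.Icc (0:ℝ) 1 ∩ Set.Iio x = ∅ := by
          rw [← h]
          ext y
          simp only [Set.mem_inter_iff, Set.mem_Icc, Set.mem_Iio, Set.mem_empty_iff_false,
            iff_false, not_and, and_imp]
          intro h1 _ ; exact not_lt.2 h1
        rw [this, nhdsWithin_empty]
        exact Filter.mem_bot
      · have hev : ∀ᶠ u in nhdsWithin x (Set.Iio x), f u < fl x + 1 :=
          (E.left x ⟨h, hx.2⟩).eventually (eventually_lt_nhds (lt_add_one (fl x)))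
        refine ⟨{u | f u < fl x + 1} ∩ Set.Iio x, ?_, ?_⟩
        · exact Filter.inter_mem (nhdsWithin_mono x Set.inter_subset_right hev)
            (nhdsWithin_mono x Set.inter_subset_right self_mem_nhdsWithin)
        · refine ⟨fl x + 1, fun y hy => ?_⟩
          obtain ⟨u, hu, rfl⟩ := hy
          exact (hu.1).le
    have hright : ∃ u ∈ nhdsWithin x (Set.Icc (0:ℝ) 1 ∩ Set.Ici x), BddAbove (f '' u) := by
      rcases eq_or_lt_of_le hx.2 with h | h
      · have hSeq : Set.Icc (0:ℝ) 1 ∩ Set.Ici x = {x} := by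
          ext y
          simp only [Set.mem_inter_iff, Set.mem_Icc, Set.mem_Ici, Set.mem_singleton_iff]
          constructor
          · rintro ⟨⟨_, hy1⟩, hy2⟩
            exact le_antisymm (h ▸ hy1) hy2
          · rintro rfl
            exact ⟨hx, le_rfl⟩
        refine ⟨{x}, by rw [← hSeq]; exact self_mem_nhdsWithin, ?_⟩
        rw [Set.image_singleton]
        exact bddAbove_singleton
      · have hev : ∀ᶠ u in nhdsWithin x (Set.Ici x), f u < f x + 1 :=
          (E.right x ⟨hx.1, h⟩).eventually (eventually_lt_nhds (lt_add_one (f x)))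
        refine ⟨{u | f u < f x + 1} ∩ Set.Ici x, ?_, ?_⟩
        · exact Filter.inter_mem (nhdsWithin_mono x Set.inter_subset_right hev)
            (nhdsWithin_mono x Set.inter_subset_right self_mem_nhdsWithin)
        · refine ⟨f x + 1, fun y hy => ?_⟩
          obtain ⟨u, hu, rfl⟩ := hy
          exact (hu.1).le
    obtain ⟨u1, hu1, hb1⟩ := hleft
    obtain ⟨u2, hu2, hb2⟩ := hright
    refine ⟨u1 ∪ u2, ?_, ?_⟩
    · have hsplit : Set.Icc (0:ℝ) 1 = (Set.Icc (0:ℝ) 1 ∩ Set.Iio x) ∪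
          (Set.Icc (0:ℝ) 1 ∩ Set.Ici x) := by
        rw [← Set.inter_union_distrib_left, Set.Iio_union_Ici, Set.inter_univ]
      rw [hsplit, nhdsWithin_union]
      exact ⟨Filter.mem_of_superset hu1 Set.subset_union_left,
        Filter.mem_of_superset hu2 Set.subset_union_right⟩
    · show BddAbove (f '' (u1 ∪ u2))
      rw [Set.image_union]
      exact hb1.union hb2

end LT7

namespace LT7
variable {f fl : ℝ → ℝ}

lemma f_le_sSup (E : Exc f fl) {u : ℝ} (hu : u ∈ Set.Icc (0:ℝ) 1) :
    f u ≤ sSup (f '' Set.Icc (0:ℝ) 1) :=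
  le_csSup (bddAbove_image E) (Set.mem_image_of_mem f hu)

lemma looptree_le_two_sSup (E : Exc f fl) {s t : ℝ} (hs : s ∈ Set.Icc (0:ℝ) 1)
    (ht : t ∈ Set.Icc (0:ℝ) 1) :
    looptreeDist f fl s t ≤ 2 * sSup (f '' Set.Icc (0:ℝ) 1) := by
  set M := sSup (f '' Set.Icc (0:ℝ) 1) with hM
  set m := mca f fl s t with hmdef
  have hm : m ∈ Set.Icc (0:ℝ) 1 := mca_mem_Icc E hs ht
  have hms : Prec f fl m s := mca_prec_left E hs ht
  have hmt : Prec f fl m t := mca_prec_right E hs ht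
  have hxs0 : 0 ≤ xpos f fl m s := xpos_nonneg hms
  have hxt0 : 0 ≤ xpos f fl m t := xpos_nonneg hmt
  have h1 : cycleDist (jump f fl m) (xpos f fl m s) (xpos f fl m t)
      ≤ xpos f fl m s + xpos f fl m t := by
    refine (cycleDist_le_abs _ _ _).trans ?_
    rw [abs_sub_le_iff]
    constructor <;> linarith
  have hbound : ∀ w, w ∈ Set.Icc (0:ℝ) 1 → Prec f fl m w → dZero f fl m w ≤ M - infIcc f m w := by
    intro w hw hmw
    refine dZero_le E hm.1 hw ((infIcc_le E hm.1 hw.2 ⟨hmw.1, le_rfl⟩).trans (f_le_sSup E hw)) ?_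
    intro r hr hrw
    constructor
    · exact infIcc_le_fl E hm.1 (lt_of_le_of_ne hr.1.1 hr.2.1) hr.2.2.1 hw.2
    · exact (infIcc_le E (hm.1.trans hr.1.1) hw.2 ⟨hr.2.2.1, le_rfl⟩).trans (f_le_sSup E hw)
  have h2 := hbound s hs hms
  have h3 := hbound t ht hmt
  have hfl0 : 0 ≤ fl m := fl_nonneg E hm
  have hxs : xpos f fl m s = infIcc f m s - fl m := rfl
  have hxt : xpos f fl m t = infIcc f m t - fl m := rfl
  unfold looptreeDist
  rw [← hmdef]
  linarith

/-- window to the right of `s`. -/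
lemma right_window (E : Exc f fl) {s : ℝ} (hs : s ∈ Set.Ico (0:ℝ) 1) {ε : ℝ} (hε : 0 < ε) :
    ∃ δ > 0, ∀ v ∈ Set.Ico s (s + δ), |f v - f s| < ε := by
  have hev : ∀ᶠ v in nhdsWithin s (Set.Ici s), dist (f v) (f s) < ε :=
    (Metric.tendsto_nhds.1 (E.right s hs)) ε hε
  obtain ⟨u0, hu0, hsub⟩ := mem_nhdsGE_iff_exists_Ico_subset.1 hev
  refine ⟨u0 - s, by simp [Set.mem_Ioi.1 hu0], fun v hv => ?_⟩
  have h2 := hsub ⟨hv.1, show v < u0 by linarith [hv.2]⟩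
  rw [Set.mem_setOf_eq, Real.dist_eq] at h2
  exact h2

/-- window to the left of `s`. -/
lemma left_window (E : Exc f fl) {s : ℝ} (hs : s ∈ Set.Ioc (0:ℝ) 1) {ε : ℝ} (hε : 0 < ε) :
    ∃ δ > 0, ∀ v ∈ Set.Ico (s - δ) s, |f v - fl s| < ε := by
  have hev : ∀ᶠ v in nhdsWithin s (Set.Iio s), dist (f v) (fl s) < ε :=
    (Metric.tendsto_nhds.1 (E.left s hs)) ε hε
  obtain ⟨l, hl, hsub⟩ := mem_nhdsLT_iff_exists_Ioo_subset.1 hev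
  refine ⟨(s - l) / 2, by linarith [Set.mem_Iio.1 hl], fun v hv => ?_⟩
  have hlv : l < v := by
    have := hv.1
    have := Set.mem_Iio.1 hl
    linarith
  have h2 := hsub ⟨hlv, hv.2⟩
  rw [Set.mem_setOf_eq, Real.dist_eq] at h2
  exact h2

end LT7

namespace LT7
variable {f fl : ℝ → ℝ}

lemma d_small_right (E : Exc f fl) {s u ε : ℝ} (hs : s ∈ Set.Icc (0:ℝ) 1)
    (hu : u ∈ Set.Icc (0:ℝ) 1) (hsu : s ≤ u) (hε : 0 < ε)
    (hwin : ∀ v ∈ Set.Icc s u, |f v - f s| < ε) :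
    looptreeDist f fl u s ≤ 5 * ε := by
  rw [looptree_symm]
  have hI : f s - ε ≤ infIcc f s u :=
    le_infIcc hsu (fun v hv => by have := abs_lt.1 (hwin v hv); linarith)
  have hfu : f u ≤ f s + ε := by have := abs_lt.1 (hwin u ⟨hsu, le_rfl⟩); linarith
  by_cases hprec : Prec f fl s u
  · have hmca : mca f fl s u = s := mca_of_prec E hs hu hprec
    unfold looptreeDist
    rw [hmca, dZero_self]
    have hxss : xpos f fl s s = jump f fl s := by unfold xpos jump; rw [infIcc_self]
    have hx0 : 0 ≤ xpos f fl s u := xpos_nonneg hprec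
    have hx_le : xpos f fl s u ≤ jump f fl s := xpos_le_jump E hs.1 hu.2 hprec
    have hcyc : cycleDist (jump f fl s) (xpos f fl s s) (xpos f fl s u) ≤ ε := by
      refine (cycleDist_le_abs _ _ _).trans ?_
      rw [hxss, abs_of_nonneg (by linarith : (0:ℝ) ≤ jump f fl s - xpos f fl s u)]
      show f s - fl s - (infIcc f s u - fl s) ≤ ε
      linarith
    have hdz : dZero f fl s u ≤ (f s + ε) - (f s - ε) := by
      refine dZero_le E hs.1 hu (by linarith) ?_
      intro r hr hru
      have hsr : s < r := lt_of_le_of_ne hr.1.1 hr.2.1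
      constructor
      · refine le_fl E hs.1 hsr (hr.2.2.1.trans hu.2) (fun v hv => ?_)
        have := abs_lt.1 (hwin v ⟨hv.1, hv.2.le.trans hr.2.2.1⟩)
        linarith
      · exact (infIcc_le E (hs.1.trans hr.1.1) hu.2 ⟨hr.2.2.1, le_rfl⟩).trans hfu
    linarith
  · set m := mca f fl s u with hmdef
    have hm : m ∈ Set.Icc (0:ℝ) 1 := mca_mem_Icc E hs hu
    have hms : Prec f fl m s := mca_prec_left E hs hu
    have hmu : Prec f fl m u := mca_prec_right E hs hu
    have hmax : ∀ r, r ∈ Set.Icc (0:ℝ) 1 → Prec f fl r s → Prec f fl r u → r ≤ m :=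
      fun r hr h1 h2 => le_mca E ⟨hr, h1, h2⟩
    have hmlt : m < s := lt_of_le_of_ne (mca_le_left E hs hu) (fun h => hprec (h ▸ hmu))
    have hIm_mono : infIcc f m u ≤ infIcc f m s := infIcc_mono_right E hms.1 hsu hm.1 hu.2
    have hIms_le : infIcc f m s ≤ f s := infIcc_le E hm.1 hs.2 ⟨hms.1, le_rfl⟩
    have hIm_low : infIcc f m s - ε ≤ infIcc f m u := by
      refine le_infIcc (hms.1.trans hsu) (fun v hv => ?_)
      rcases le_total v s with h | h
      · linarith [infIcc_le E hm.1 hs.2 ⟨hv.1, h⟩]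
      · have := abs_lt.1 (hwin v ⟨h, hv.2⟩)
        linarith
    have hcyc : cycleDist (jump f fl m) (xpos f fl m s) (xpos f fl m u) ≤ ε := by
      refine (cycleDist_le_abs _ _ _).trans ?_
      have h1 : xpos f fl m s - xpos f fl m u = infIcc f m s - infIcc f m u := by
        unfold xpos; ring
      rw [abs_sub_le_iff]
      constructor <;> unfold xpos <;> linarith
    have hdz1 : dZero f fl m s ≤ f s - (f s - ε) := by
      refine dZero_le E hm.1 hs (by linarith) ?_
      intro r hr hrs
      have hmr : m < r := lt_of_le_of_ne hr.1.1 hr.2.1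
      have hrs' : r < s := lt_of_le_of_ne hr.2.2.1 hrs
      have hnru : ¬ Prec f fl r u := fun hc =>
        absurd (hmax r (dz_mem_Icc hm.1 hs.2 hr) hr.2.2 hc) (not_le.2 hmr)
      have hmin : min (infIcc f r s) (infIcc f s u) ≤ infIcc f r u := by
        refine le_infIcc (hr.2.2.1.trans hsu) (fun v hv => ?_)
        rcases le_total v s with h | h
        · exact (min_le_left _ _).trans (infIcc_le E (hm.1.trans hr.1.1) hs.2 ⟨hv.1, h⟩)
        · exact (min_le_right _ _).trans (infIcc_le E hs.1 hu.2 ⟨h, hv.2⟩)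
      have hflr : fl r ≤ infIcc f r s := hr.2.2.2
      have hnot : infIcc f r u < fl r := by
        by_contra hc
        exact hnru ⟨hr.2.2.1.trans hsu, not_lt.1 hc⟩
      rcases le_total (infIcc f r s) (infIcc f s u) with h | h
      · rw [min_eq_left h] at hmin
        linarith
      · rw [min_eq_right h] at hmin
        refine ⟨by linarith, infIcc_le E (hm.1.trans hr.1.1) hs.2 ⟨hrs'.le, le_rfl⟩⟩
    have hdz2 : dZero f fl m u ≤ (f s + ε) - (f s - ε) := by
      refine dZero_le E hm.1 hu (by linarith) ?_
      intro r hr hru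
      have hmr : m < r := lt_of_le_of_ne hr.1.1 hr.2.1
      have hrgt : s < r := by
        by_contra hc
        push_neg at hc
        have hprs : Prec f fl r s :=
          ⟨hc, hr.2.2.2.trans (infIcc_mono_right E hc hsu (hm.1.trans hr.1.1) hu.2)⟩
        exact absurd (hmax r (dz_mem_Icc hm.1 hu.2 hr) hprs hr.2.2) (not_le.2 hmr)
      constructor
      · refine le_fl E hs.1 hrgt (hr.2.2.1.trans hu.2) (fun v hv => ?_)
        have := abs_lt.1 (hwin v ⟨hv.1, hv.2.le.trans hr.2.2.1⟩)
        linarith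
      · exact (infIcc_le E (hm.1.trans hr.1.1) hu.2 ⟨hr.2.2.1, le_rfl⟩).trans hfu
    unfold looptreeDist
    rw [← hmdef]
    linarith

lemma d_small_left (E : Exc f fl) {w u s ε : ℝ} (hu : u ∈ Set.Icc (0:ℝ) 1)
    (hs : s ∈ Set.Icc (0:ℝ) 1) (hw0 : 0 ≤ w) (hwu : w < u) (hus : u < s) (hε : 0 < ε)
    (hwin : ∀ v ∈ Set.Ico w s, |f v - fl s| < ε) :
    looptreeDist f fl u s ≤ 5 * ε := by
  have hfls : fl s ≤ f s := E.flle s hs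
  have hfu : |f u - fl s| < ε := hwin u ⟨hwu.le, hus⟩
  have hfu1 : f u ≤ fl s + ε := by have := abs_lt.1 hfu; linarith
  have hI : fl s - ε ≤ infIcc f u s := by
    refine le_infIcc hus.le (fun v hv => ?_)
    rcases eq_or_lt_of_le hv.2 with rfl | h
    · linarith
    · have := abs_lt.1 (hwin v ⟨hwu.le.trans hv.1, h⟩); linarith
  by_cases hprec : Prec f fl u s
  · have hmca : mca f fl u s = u := mca_of_prec E hu hs hprec
    unfold looptreeDist
    rw [hmca, dZero_self]
    have hxuu : xpos f fl u u = jump f fl u := by unfold xpos jump; rw [infIcc_self]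
    have hx0 : 0 ≤ xpos f fl u s := xpos_nonneg hprec
    have hx_le : xpos f fl u s ≤ jump f fl u := xpos_le_jump E hu.1 hs.2 hprec
    have hcyc : cycleDist (jump f fl u) (xpos f fl u u) (xpos f fl u s) ≤ 2*ε := by
      refine (cycleDist_le_abs _ _ _).trans ?_
      rw [hxuu, abs_of_nonneg (by linarith : (0:ℝ) ≤ jump f fl u - xpos f fl u s)]
      show f u - fl u - (infIcc f u s - fl u) ≤ 2*ε
      linarith
    have hdz : dZero f fl u s ≤ fl s - (fl s - ε) := by
      refine dZero_le E hu.1 hs (by linarith) ?_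
      intro r hr hrs
      have hur : u < r := lt_of_le_of_ne hr.1.1 hr.2.1
      have hrs' : r < s := lt_of_le_of_ne hr.2.2.1 hrs
      constructor
      · refine le_fl E hu.1 hur (hr.2.2.1.trans hs.2) (fun v hv => ?_)
        have := abs_lt.1 (hwin v ⟨hwu.le.trans hv.1, hv.2.trans hrs'⟩)
        linarith
      · exact infIcc_le_fl E (hu.1.trans hr.1.1) hrs' le_rfl hs.2
    linarith
  · set m := mca f fl u s with hmdef
    have hm : m ∈ Set.Icc (0:ℝ) 1 := mca_mem_Icc E hu hs
    have hmu : Prec f fl m u := mca_prec_left E hu hs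
    have hms : Prec f fl m s := mca_prec_right E hu hs
    have hmax : ∀ r, r ∈ Set.Icc (0:ℝ) 1 → Prec f fl r u → Prec f fl r s → r ≤ m :=
      fun r hr h1 h2 => le_mca E ⟨hr, h1, h2⟩
    have hmlt : m < u := lt_of_le_of_ne (mca_le_left E hu hs) (fun h => hprec (h ▸ hms))
    have hImu_le : infIcc f m u ≤ f u := infIcc_le E hm.1 hu.2 ⟨hmu.1, le_rfl⟩
    have hIm_mono : infIcc f m s ≤ infIcc f m u := infIcc_mono_right E hmu.1 hus.le hm.1 hs.2
    have hIm_low : infIcc f m u - 2*ε ≤ infIcc f m s := by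
      refine le_infIcc (hmu.1.trans hus.le) (fun v hv => ?_)
      rcases le_total v u with h | h
      · linarith [infIcc_le E hm.1 hu.2 ⟨hv.1, h⟩]
      · rcases eq_or_lt_of_le hv.2 with rfl | h2
        · linarith
        · have := abs_lt.1 (hwin v ⟨hwu.le.trans h, h2⟩)
          linarith
    have hcyc : cycleDist (jump f fl m) (xpos f fl m u) (xpos f fl m s) ≤ 2*ε := by
      refine (cycleDist_le_abs _ _ _).trans ?_
      rw [abs_sub_le_iff]
      constructor <;> unfold xpos <;> linarith
    have hdz1 : dZero f fl m u ≤ (fl s + ε) - (fl s - ε) := by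
      refine dZero_le E hm.1 hu (by linarith) ?_
      intro r hr hru
      have hmr : m < r := lt_of_le_of_ne hr.1.1 hr.2.1
      have hnrs : ¬ Prec f fl r s := fun hc =>
        absurd (hmax r (dz_mem_Icc hm.1 hu.2 hr) hr.2.2 hc) (not_le.2 hmr)
      have hmin : min (infIcc f r u) (infIcc f u s) ≤ infIcc f r s := by
        refine le_infIcc (hr.2.2.1.trans hus.le) (fun v hv => ?_)
        rcases le_total v u with h | h
        · exact (min_le_left _ _).trans (infIcc_le E (hm.1.trans hr.1.1) hu.2 ⟨hv.1, h⟩)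
        · exact (min_le_right _ _).trans (infIcc_le E hu.1 hs.2 ⟨h, hv.2⟩)
      have hflr : fl r ≤ infIcc f r u := hr.2.2.2
      have hnot : infIcc f r s < fl r := by
        by_contra hc
        exact hnrs ⟨hr.2.2.1.trans hus.le, not_lt.1 hc⟩
      rcases le_total (infIcc f r u) (infIcc f u s) with h | h
      · rw [min_eq_left h] at hmin
        linarith
      · rw [min_eq_right h] at hmin
        refine ⟨by linarith, (infIcc_le E (hm.1.trans hr.1.1) hu.2 ⟨hr.2.2.1, le_rfl⟩).trans hfu1⟩
    have hdz2 : dZero f fl m s ≤ fl s - (fl s - ε) := by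
      refine dZero_le E hm.1 hs (by linarith) ?_
      intro r hr hrs
      have hmr : m < r := lt_of_le_of_ne hr.1.1 hr.2.1
      have hrs' : r < s := lt_of_le_of_ne hr.2.2.1 hrs
      have hrgt : u < r := by
        by_contra hc
        push_neg at hc
        have hpru : Prec f fl r u :=
          ⟨hc, hr.2.2.2.trans (infIcc_mono_right E hc hus.le (hm.1.trans hr.1.1) hs.2)⟩
        exact absurd (hmax r (dz_mem_Icc hm.1 hs.2 hr) hpru hr.2.2) (not_le.2 hmr)
      constructor
      · refine le_fl E hu.1 hrgt (hr.2.2.1.trans hs.2) (fun v hv => ?_)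
        have := abs_lt.1 (hwin v ⟨hwu.le.trans hv.1, hv.2.trans hrs'⟩)
        linarith
      · exact infIcc_le_fl E (hm.1.trans hr.1.1) hrs' le_rfl hs.2
    unfold looptreeDist
    rw [← hmdef]
    linarith

end LT7

namespace LT7
variable {f fl : ℝ → ℝ}

lemma d_small (E : Exc f fl) {s : ℝ} (hs : s ∈ Set.Icc (0:ℝ) 1) {ε : ℝ} (hε : 0 < ε) :
    ∃ δ > 0, ∀ u ∈ Set.Icc (0:ℝ) 1, |u - s| < δ → looptreeDist f fl u s < ε := by
  have hε' : 0 < ε / 6 := by linarith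
  have hR : ∃ δR > 0, ∀ u ∈ Set.Icc (0:ℝ) 1, s ≤ u → u - s < δR →
      looptreeDist f fl u s < ε := by
    rcases eq_or_lt_of_le hs.2 with h1 | h1
    · refine ⟨1, one_pos, fun u hu hsu _ => ?_⟩
      have : u = s := le_antisymm (h1 ▸ hu.2) hsu
      rw [this, looptree_self E hs]
      exact hε
    · obtain ⟨δR, hδR, hw⟩ := right_window E ⟨hs.1, h1⟩ hε'
      refine ⟨δR, hδR, fun u hu hsu hlt => ?_⟩
      have h5 : looptreeDist f fl u s ≤ 5 * (ε / 6) :=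
        d_small_right E hs hu hsu hε' (fun v hv => hw v ⟨hv.1, by linarith [hv.2]⟩)
      linarith
  have hL : ∃ δL > 0, ∀ u ∈ Set.Icc (0:ℝ) 1, u < s → s - u < δL →
      looptreeDist f fl u s < ε := by
    rcases eq_or_lt_of_le hs.1 with h1 | h1
    · exact ⟨1, one_pos, fun u hu hus _ => absurd hus (not_lt.2 (h1 ▸ hu.1))⟩
    · obtain ⟨δ0, hδ0, hw⟩ := left_window E ⟨h1, hs.2⟩ hε'
      refine ⟨min δ0 s, lt_min hδ0 h1, fun u hu hus hlt => ?_⟩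
      set w := ((s - min δ0 s) + u) / 2 with hwdef
      have hw0 : 0 ≤ w := by
        have := min_le_right δ0 s
        have := hu.1
        rw [hwdef]; linarith
      have hwu : w < u := by
        rw [hwdef]; linarith
      have h5 : looptreeDist f fl u s ≤ 5 * (ε / 6) := by
        refine d_small_left E hu hs hw0 hwu hus hε' (fun v hv => hw v ⟨?_, hv.2⟩)
        have h2 := min_le_left δ0 s
        have h3 := hv.1
        rw [hwdef] at h3
        linarith
      linarith
  obtain ⟨δR, hδR, hR'⟩ := hR
  obtain ⟨δL, hδL, hL'⟩ := hL
  refine ⟨min δR δL, lt_min hδR hδL, fun u hu hd => ?_⟩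
  rcases le_or_gt s u with h | h
  · refine hR' u hu h ?_
    have := abs_lt.1 hd
    exact lt_of_lt_of_le this.2 (min_le_left _ _)
  · refine hL' u hu h ?_
    have := abs_lt.1 hd
    calc s - u < min δR δL := by linarith [this.1]
      _ ≤ δL := min_le_right _ _

lemma looptree_continuousOn (E : Exc f fl) :
    ContinuousOn (fun p : ℝ × ℝ => looptreeDist f fl p.1 p.2)
      (Set.Icc (0:ℝ) 1 ×ˢ Set.Icc (0:ℝ) 1) := by
  intro p hp
  rw [Metric.continuousWithinAt_iff]
  intro ε hε
  have hε3 : 0 < ε / 3 := by linarith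
  obtain ⟨δ1, hδ1, h1⟩ := d_small E hp.1 hε3
  obtain ⟨δ2, hδ2, h2⟩ := d_small E hp.2 hε3
  refine ⟨min δ1 δ2, lt_min hδ1 hδ2, fun q hq hdist => ?_⟩
  have hq1 : q.1 ∈ Set.Icc (0:ℝ) 1 := hq.1
  have hq2 : q.2 ∈ Set.Icc (0:ℝ) 1 := hq.2
  have hp1 : p.1 ∈ Set.Icc (0:ℝ) 1 := hp.1
  have hp2 : p.2 ∈ Set.Icc (0:ℝ) 1 := hp.2
  have hd1 : |q.1 - p.1| < δ1 := by
    have : dist q.1 p.1 ≤ dist q p := by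
      rw [Prod.dist_eq]; exact le_max_left _ _
    rw [← Real.dist_eq]
    exact lt_of_le_of_lt this (lt_of_lt_of_le hdist (min_le_left _ _))
  have hd2 : |q.2 - p.2| < δ2 := by
    have : dist q.2 p.2 ≤ dist q p := by
      rw [Prod.dist_eq]; exact le_max_right _ _
    rw [← Real.dist_eq]
    exact lt_of_le_of_lt this (lt_of_lt_of_le hdist (min_le_right _ _))
  have e1 : looptreeDist f fl q.1 p.1 < ε / 3 := h1 q.1 hq1 hd1
  have e2 : looptreeDist f fl q.2 p.2 < ε / 3 := h2 q.2 hq2 hd2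
  have e1' : looptreeDist f fl p.1 q.1 < ε / 3 := by rwa [← looptree_symm] at e1
  have e2' : looptreeDist f fl p.2 q.2 < ε / 3 := by rwa [← looptree_symm] at e2
  have t1 : looptreeDist f fl q.1 q.2
      ≤ looptreeDist f fl q.1 p.1 + looptreeDist f fl p.1 p.2 + looptreeDist f fl p.2 q.2 := by
    have a1 := looptree_triangle E hq1 hq2 hp1
    have a2 := looptree_triangle E hp1 hq2 hp2
    linarith
  have t2 : looptreeDist f fl p.1 p.2
      ≤ looptreeDist f fl p.1 q.1 + looptreeDist f fl q.1 q.2 + looptreeDist f fl q.2 p.2 := by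
    have a1 := looptree_triangle E hp1 hp2 hq1
    have a2 := looptree_triangle E hq1 hp2 hq2
    linarith
  rw [Real.dist_eq, abs_lt]
  constructor <;> linarith

end LT7


/-- d is a continuous pseudo-distance on [0,1]²:
0 ≤ d(s,t) ≤ 2 sup f < ∞, d(s,s) = 0, symmetry, triangle inequality, and continuity. -/
theorem looptreeDist_pseudoDist_continuous (f fl : ℝ → ℝ)
    (hf_right : ∀ t ∈ Set.Ico (0:ℝ) 1, Filter.Tendsto f (nhdsWithin t (Set.Ici t)) (nhds (f t)))
    (hf_left : ∀ t ∈ Set.Ioc (0:ℝ) 1, Filter.Tendsto f (nhdsWithin t (Set.Iio t)) (nhds (fl t)))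
    (hfl0 : fl 0 = 0)
    (hf_nonneg : ∀ t ∈ Set.Icc (0:ℝ) 1, 0 ≤ f t)
    (hf_jump : ∀ t ∈ Set.Icc (0:ℝ) 1, fl t ≤ f t)
    (hf0 : f 0 = 0) (hf1 : f 1 = 0) :
    BddAbove (f '' Set.Icc (0:ℝ) 1) ∧
    (∀ s ∈ Set.Icc (0:ℝ) 1, ∀ t ∈ Set.Icc (0:ℝ) 1,
      0 ≤ looptreeDist f fl s t ∧
      looptreeDist f fl s t ≤ 2 * sSup (f '' Set.Icc (0:ℝ) 1) ∧
      looptreeDist f fl s s = 0 ∧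
      looptreeDist f fl s t = looptreeDist f fl t s ∧
      ∀ r ∈ Set.Icc (0:ℝ) 1,
        looptreeDist f fl s t ≤ looptreeDist f fl s r + looptreeDist f fl r t) ∧
    ContinuousOn (fun p : ℝ × ℝ => looptreeDist f fl p.1 p.2)
      (Set.Icc (0:ℝ) 1 ×ˢ Set.Icc (0:ℝ) 1) := by
  have E : Exc f fl := ⟨hf_right, hf_left, hfl0, hf_nonneg, hf_jump, hf0, hf1⟩
  refine ⟨LT7.bddAbove_image E, fun s hs t ht => ?_, LT7.looptree_continuousOn E⟩
  exact ⟨LT7.looptree_nonneg E hs ht, LT7.looptree_le_two_sSup E hs ht,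
    LT7.looptree_self E hs, LT7.looptree_symm s t,
    fun r hr => LT7.looptree_triangle E hs ht hr⟩
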